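/- Let u and v be words over a set V of variables. The identity u = v holds in every semigroup satisfying the identities xy = x²y and x²y² = y²x² (i.e., in the variety P = var{xy = x²y, x²y² = y²x²}) if and only if c(u) = c(v) and either the last letters t(u) and t(v) are multiple in u and in v respectively, or t(u) = t(v) and this letter is simple both in u and in v. -/

import Mathlib

/-- Value of a word (nonempty list of variables) under an assignment `f : V → S`,
computed as an element of `Option S`: `none` for the empty list, and `some` of the
ordered product of the images of the letters otherwise. -/
def evalWord {V S : Type*} [Mul S] (f : V → S) (w : List V) : Option S :=
  w.foldr (fun x o => some (o.elim (f x) (fun s => f x * s))) none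

namespace Stmt2Aux

/-! ### Generic `evalWord` lemmas -/

lemma evalWord_cons {V S : Type*} [Mul S] (f : V → S) (x : V) (w : List V) :
    evalWord f (x :: w) = some ((evalWord f w).elim (f x) (fun s => f x * s)) := rfl

lemma evalWord_up {V S : Type*} [Mul S] (f : V → S) (w : List V) :
    evalWord (fun x => (ULift.up (f x) : ULift S)) w = (evalWord f w).map ULift.up := by
  induction w with
  | nil => rfl
  | cons x w ih =>
    rw [evalWord_cons, evalWord_cons, ih]
    cases evalWord f w with
    | none => rfl
    | some s =>
      apply congrArg some
      apply ULift.ext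
      rfl

lemma evalWord_comp {V W S : Type*} [Mul S] (φ : V → W) (g : W → S) (w : List V) :
    evalWord (fun x => g (φ x)) w = evalWord g (w.map φ) := by
  induction w with
  | nil => rfl
  | cons x w ih => rw [List.map_cons, evalWord_cons, evalWord_cons, ih]

/-! ### Count / dropLast bookkeeping -/

lemma count_getLast {α : Type*} [DecidableEq α] (w : List α) (hw : w ≠ []) :
    w.count (w.getLast hw) = w.dropLast.count (w.getLast hw) + 1 := by
  have h := List.dropLast_append_getLast hw
  have h2 : w.count (w.getLast hw)
      = (w.dropLast ++ [w.getLast hw]).count (w.getLast hw) := by rw [h]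
  rw [h2, List.count_append]
  simp

lemma mem_dropLast_iff {α : Type*} [DecidableEq α] (w : List α) (hw : w ≠ []) :
    w.getLast hw ∈ w.dropLast ↔ 2 ≤ w.count (w.getLast hw) := by
  rw [count_getLast w hw, ← List.count_pos_iff]
  omega

lemma not_mem_dropLast_iff {α : Type*} [DecidableEq α] (w : List α) (hw : w ≠ []) :
    w.getLast hw ∉ w.dropLast ↔ w.count (w.getLast hw) = 1 := by
  rw [count_getLast w hw, ← List.count_pos_iff]
  omega

lemma toFinset_dropLast_of_not_mem {α : Type*} [DecidableEq α] (w : List α) (hw : w ≠ [])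
    (h : w.getLast hw ∉ w.dropLast) :
    w.dropLast.toFinset = w.toFinset.erase (w.getLast hw) := by
  ext x
  simp only [List.mem_toFinset, Finset.mem_erase]
  constructor
  · intro hx
    refine ⟨?_, List.dropLast_subset w hx⟩
    rintro rfl; exact h hx
  · rintro ⟨hne, hx⟩
    have := hx
    conv at this => rw [← List.dropLast_append_getLast hw]
    rcases List.mem_append.mp this with h1 | h1
    · exact h1
    · simp at h1; exact absurd h1 hne

lemma toFinset_dropLast_of_mem {α : Type*} [DecidableEq α] (w : List α) (hw : w ≠ [])
    (h : w.getLast hw ∈ w.dropLast) :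
    w.dropLast.toFinset = w.toFinset := by
  ext x
  simp only [List.mem_toFinset]
  constructor
  · exact fun hx => List.dropLast_subset w hx
  · intro hx
    have := hx
    conv at this => rw [← List.dropLast_append_getLast hw]
    rcases List.mem_append.mp this with h1 | h1
    · exact h1
    · simp at h1; subst h1; exact h

lemma toFinset_dedup {α : Type*} [DecidableEq α] (l : List α) :
    l.dedup.toFinset = l.toFinset := by
  ext x; simp [List.mem_dedup]

/-! ### The model semigroup used for the forward direction -/

def Model : Type :=
  {p : Finset ℕ × Option ℕ // ∀ n, p.2 = some n → n ∈ p.1}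

instance : Mul Model :=
  ⟨fun p q =>
    ⟨(p.1.1 ∪ q.1.1, q.1.2.bind (fun n => if n ∈ p.1.1 then none else some n)), by
      intro n hn
      cases hq : q.1.2 with
      | none => rw [hq] at hn; simp at hn
      | some m =>
        rw [hq] at hn
        simp only [Option.bind_some] at hn
        by_cases hm : m ∈ p.1.1
        · rw [if_pos hm] at hn; simp at hn
        · rw [if_neg hm] at hn
          have hmn : m = n := by simpa using hn
          subst hmn
          exact Finset.mem_union_right _ (q.2 m hq)⟩⟩

lemma Model.mul_fst (p q : Model) : (p * q).1.1 = p.1.1 ∪ q.1.1 := rfl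

lemma Model.mul_snd (p q : Model) :
    (p * q).1.2 = q.1.2.bind (fun n => if n ∈ p.1.1 then none else some n) := rfl

lemma Model.ext {p q : Model} (h1 : p.1.1 = q.1.1) (h2 : p.1.2 = q.1.2) : p = q :=
  Subtype.ext (Prod.ext h1 h2)

instance : Semigroup Model :=
  { (inferInstance : Mul Model) with
    mul_assoc := by
      intro p q r
      apply Model.ext
      · simp only [Model.mul_fst, Finset.union_assoc]
      · simp only [Model.mul_snd, Model.mul_fst]
        cases r.1.2 with
        | none => rfl
        | some m =>
          simp only [Option.bind_some]
          by_cases hq : m ∈ q.1.1 <;> by_cases hp : m ∈ p.1.1 <;>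
            simp [hq, hp, Finset.mem_union] }

lemma Model.sq_snd (a : Model) : (a * a).1.2 = none := by
  rw [Model.mul_snd]
  cases ha : a.1.2 with
  | none => rfl
  | some m => simp [a.2 m ha]

lemma Model.law1 (a b : Model) : a * b = (a * a) * b := by
  apply Model.ext
  · simp [Model.mul_fst]
  · simp [Model.mul_snd, Model.mul_fst]

lemma Model.law2 (a b : Model) : (a * a) * (b * b) = (b * b) * (a * a) := by
  apply Model.ext
  · simp [Model.mul_fst, Finset.union_comm]
  · rw [Model.mul_snd (a * a) (b * b), Model.mul_snd (b * b) (a * a),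
      Model.sq_snd a, Model.sq_snd b]
    rfl

def gen (n : ℕ) : Model := ⟨({n}, some n), by simp⟩

def tlOf (w : List ℕ) (hw : w ≠ []) : Option ℕ :=
  if w.getLast hw ∈ w.dropLast then none else some (w.getLast hw)

lemma tlOf_inv (w : List ℕ) (hw : w ≠ []) :
    ∀ n, tlOf w hw = some n → n ∈ w.toFinset := by
  intro n hn
  unfold tlOf at hn
  have h2 : w.getLast hw = n := by
    by_cases h : w.getLast hw ∈ w.dropLast
    · rw [if_pos h] at hn; cases hn
    · rw [if_neg h] at hn; exact Option.some_injective _ hn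
  subst h2
  exact List.mem_toFinset.mpr (List.getLast_mem hw)

lemma eval_gen : ∀ (w : List ℕ) (hw : w ≠ []),
    evalWord gen w = some ⟨(w.toFinset, tlOf w hw), tlOf_inv w hw⟩
  | [x], _ => by
      show some (gen x) = _
      apply congrArg some
      apply Model.ext
      · simp [gen]
      · simp [gen, tlOf]
  | x :: y :: l, _ => by
      have hyl : (y :: l : List ℕ) ≠ [] := by simp
      rw [evalWord_cons, eval_gen (y :: l) hyl]
      apply congrArg some
      simp only [Option.elim]
      apply Model.ext
      · show ({x} : Finset ℕ) ∪ (y :: l).toFinset = (x :: y :: l).toFinset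
        simp [Finset.insert_eq, -Finset.singleton_union]
      · show ((tlOf (y :: l) hyl).bind
            (fun n => if n ∈ ({x} : Finset ℕ) then none else some n)) =
            tlOf (x :: y :: l) (by simp)
        unfold tlOf
        have hgl : (x :: y :: l).getLast (by simp) = (y :: l).getLast hyl :=
          List.getLast_cons hyl
        rw [hgl, List.dropLast_cons₂]
        by_cases h1 : (y :: l).getLast hyl ∈ (y :: l).dropLast
        · simp [h1, List.mem_cons]
        · by_cases h2 : (y :: l).getLast hyl = x
          · simp [h1, h2]
          · simp [h1, h2, List.mem_cons]

/-! ### Rewriting calculus for the backward direction -/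

section Backward

variable {V S : Type*} [DecidableEq V] [Semigroup S] (f : V → S)

/-- `act l s` is the product of the letters of `l` (under `f`) followed by `s`. -/
def act (l : List V) (s : S) : S := l.foldr (fun x t => f x * t) s

lemma act_nil (s : S) : act f [] s = s := rfl

lemma act_cons (x : V) (l : List V) (s : S) : act f (x :: l) s = f x * act f l s := rfl

lemma eval_act : ∀ (l : List V) (t : V), evalWord f (l ++ [t]) = some (act f l (f t))
  | [], t => rfl
  | x :: l, t => by
      rw [List.cons_append, evalWord_cons, eval_act l t]
      rfl

variable {h1x : Unit}

lemma comm3 (h1 : ∀ a b : S, a * b = (a * a) * b)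
    (h2 : ∀ a b : S, (a * a) * (b * b) = (b * b) * (a * a)) (a b s : S) :
    a * (b * s) = b * (a * s) :=
  calc a * (b * s) = (a * a) * ((b * b) * s) := by rw [h1 a (b * s), h1 b s]
    _ = ((a * a) * (b * b)) * s := (mul_assoc _ _ _).symm
    _ = ((b * b) * (a * a)) * s := by rw [h2 a b]
    _ = (b * b) * ((a * a) * s) := mul_assoc _ _ _
    _ = (b * b) * (a * s) := congrArg (fun t => (b * b) * t) (h1 a s).symm
    _ = b * (a * s) := (h1 b (a * s)).symm

lemma dup3 (h1 : ∀ a b : S, a * b = (a * a) * b) (a s : S) : a * (a * s) = a * s := by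
  rw [← mul_assoc, ← h1]

lemma base_eq (h1 : ∀ a b : S, a * b = (a * a) * b)
    (h2 : ∀ a b : S, (a * a) * (b * b) = (b * b) * (a * a)) (a b : S) :
    b * (a * a) = a * (b * b) :=
  calc b * (a * a) = (b * b) * (a * a) := h1 b (a * a)
    _ = (a * a) * (b * b) := (h2 a b).symm
    _ = a * (b * b) := (h1 a (b * b)).symm

lemma shift (h1 : ∀ a b : S, a * b = (a * a) * b)
    (h2 : ∀ a b : S, (a * a) * (b * b) = (b * b) * (a * a)) (a : S) :
    ∀ (l : List V) (s : S), a * act f l s = act f l (a * s)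
  | [], s => rfl
  | x :: l, s => by
      rw [act_cons, act_cons, comm3 h1 h2, shift h1 h2 a l s]

lemma act_perm (h1 : ∀ a b : S, a * b = (a * a) * b)
    (h2 : ∀ a b : S, (a * a) * (b * b) = (b * b) * (a * a))
    {l₁ l₂ : List V} (h : l₁.Perm l₂) : ∀ s : S, act f l₁ s = act f l₂ s := by
  induction h with
  | nil => intro s; rfl
  | cons x _ ih => intro s; rw [act_cons, act_cons, ih]
  | swap x y l => intro s; rw [act_cons, act_cons, act_cons, act_cons, comm3 h1 h2]
  | trans _ _ ih1 ih2 => intro s; rw [ih1, ih2]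

lemma pull (h1 : ∀ a b : S, a * b = (a * a) * b)
    (h2 : ∀ a b : S, (a * a) * (b * b) = (b * b) * (a * a)) :
    ∀ {l : List V} {x : V}, x ∈ l → ∀ s : S,
    act f l s = f x * act f (l.erase x) s := by
  intro l
  induction l with
  | nil => intro x hx; simp at hx
  | cons y l ih =>
    intro x hx s
    by_cases hxy : y = x
    · subst hxy
      rw [List.erase_cons_head, act_cons]
    · have hm : x ∈ l := by
        rcases List.mem_cons.mp hx with h | h
        · exact absurd h.symm hxy
        · exact h
      rw [List.erase_cons_tail (by simpa using hxy), act_cons, act_cons, ih hm s,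
        comm3 h1 h2]

lemma act_dedup (h1 : ∀ a b : S, a * b = (a * a) * b)
    (h2 : ∀ a b : S, (a * a) * (b * b) = (b * b) * (a * a)) :
    ∀ (l : List V) (s : S), act f l s = act f l.dedup s := by
  intro l
  induction l with
  | nil => intro s; rfl
  | cons x l ih =>
    intro s
    by_cases h : x ∈ l
    · rw [List.dedup_cons_of_mem h, act_cons, pull f h1 h2 h s, dup3 h1,
        ← pull f h1 h2 h s, ih]
    · rw [List.dedup_cons_of_notMem h, act_cons, act_cons, ih]

lemma act_toFinset (h1 : ∀ a b : S, a * b = (a * a) * b)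
    (h2 : ∀ a b : S, (a * a) * (b * b) = (b * b) * (a * a))
    {l₁ l₂ : List V} (h : l₁.toFinset = l₂.toFinset) (s : S) :
    act f l₁ s = act f l₂ s := by
  rw [act_dedup f h1 h2 l₁, act_dedup f h1 h2 l₂]
  exact act_perm f h1 h2
    (List.perm_of_nodup_nodup_toFinset_eq (List.nodup_dedup l₁) (List.nodup_dedup l₂)
      (by rw [toFinset_dedup, toFinset_dedup, h])) s

end Backward

end Stmt2Aux

open Stmt2Aux in
/-- The identity `u = v` holds in every semigroup satisfying `xy = x²y` and
`x²y² = y²x²` (the variety `P`) iff `c(u) = c(v)` and either the last letters `t(u)`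
and `t(v)` are multiple in `u` and in `v` respectively, or `t(u) = t(v)` and this
letter is simple both in `u` and in `v`. -/
theorem statement2 {V : Type*} [DecidableEq V] (u v : List V) (hu : u ≠ []) (hv : v ≠ []) :
    (∀ (S : Type*) [Semigroup S],
        (∀ a b : S, a * b = (a * a) * b) →
        (∀ a b : S, (a * a) * (b * b) = (b * b) * (a * a)) →
        ∀ f : V → S, evalWord f u = evalWord f v) ↔
      (({x | x ∈ u} : Set V) = {x | x ∈ v} ∧
        ((2 ≤ u.count (u.getLast hu) ∧ 2 ≤ v.count (v.getLast hv)) ∨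
          (u.getLast hu = v.getLast hv ∧
            u.count (u.getLast hu) = 1 ∧ v.count (v.getLast hv) = 1))) := by
  constructor
  · -- forward direction: use the model semigroup
    intro H
    set L : List V := (u ++ v).dedup with hL
    have memL : ∀ x : V, x ∈ u ∨ x ∈ v → x ∈ L := by
      intro x hx
      rw [hL, List.mem_dedup, List.mem_append]
      exact hx
    set ι : V → ℕ := fun x => List.idxOf x L with hι
    have hinj : ∀ x ∈ L, ∀ y ∈ L, ι x = ι y → x = y := by
      intro x hx y hy h
      exact (List.idxOf_inj hx).mp h
    have law1' : ∀ a b : ULift Model, a * b = (a * a) * b := by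
      intro a b; apply ULift.ext; exact Model.law1 a.down b.down
    have law2' : ∀ a b : ULift Model, (a * a) * (b * b) = (b * b) * (a * a) := by
      intro a b; apply ULift.ext; exact Model.law2 a.down b.down
    have key := H (ULift Model) law1' law2' (fun x => ULift.up (gen (ι x)))
    -- strip the ULift
    have key2 : evalWord (fun x => gen (ι x)) u = evalWord (fun x => gen (ι x)) v := by
      apply Option.map_injective (ULift.up_injective (α := Model))
      rw [← evalWord_up, ← evalWord_up]
      exact key
    rw [evalWord_comp ι gen u, evalWord_comp ι gen v] at key2
    have hu' : u.map ι ≠ [] := by simp [hu]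
    have hv' : v.map ι ≠ [] := by simp [hv]
    rw [eval_gen (u.map ι) hu', eval_gen (v.map ι) hv'] at key2
    have hpair := Subtype.ext_iff.mp (Option.some_injective _ key2)
    have hA : (u.map ι).toFinset = (v.map ι).toFinset := congrArg Prod.fst hpair
    have hT : tlOf (u.map ι) hu' = tlOf (v.map ι) hv' := congrArg Prod.snd hpair
    -- content equality
    have hmem : ∀ x : V, x ∈ u ↔ x ∈ v := by
      intro x
      constructor
      · intro hx
        have : ι x ∈ (v.map ι).toFinset := by
          rw [← hA]; simp only [List.mem_toFinset, List.mem_map]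
          exact ⟨x, hx, rfl⟩
        simp only [List.mem_toFinset, List.mem_map] at this
        obtain ⟨y, hy, hxy⟩ := this
        rwa [hinj y (memL y (Or.inr hy)) x (memL x (Or.inl hx)) hxy] at hy
      · intro hx
        have : ι x ∈ (u.map ι).toFinset := by
          rw [hA]; simp only [List.mem_toFinset, List.mem_map]
          exact ⟨x, hx, rfl⟩
        simp only [List.mem_toFinset, List.mem_map] at this
        obtain ⟨y, hy, hxy⟩ := this
        rwa [hinj y (memL y (Or.inl hy)) x (memL x (Or.inr hx)) hxy] at hy
    refine ⟨Set.ext fun x => hmem x, ?_⟩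
    -- analyze tails
    set tu := u.getLast hu with htu
    set tv := v.getLast hv with htv
    have hglu : (u.map ι).getLast hu' = ι tu := List.getLast_map (f := ι) hu'
    have hglv : (v.map ι).getLast hv' = ι tv := List.getLast_map (f := ι) hv'
    have hmu : (u.map ι).getLast hu' ∈ (u.map ι).dropLast ↔ tu ∈ u.dropLast := by
      rw [hglu, ← List.map_dropLast, List.mem_map]
      constructor
      · rintro ⟨y, hy, hxy⟩
        have hyu : y ∈ u := List.dropLast_subset u hy
        rwa [hinj y (memL y (Or.inl hyu)) tu (memL tu (Or.inl (List.getLast_mem hu))) hxy]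
          at hy
      · intro h; exact ⟨tu, h, rfl⟩
    have hmv : (v.map ι).getLast hv' ∈ (v.map ι).dropLast ↔ tv ∈ v.dropLast := by
      rw [hglv, ← List.map_dropLast, List.mem_map]
      constructor
      · rintro ⟨y, hy, hxy⟩
        have hyv : y ∈ v := List.dropLast_subset v hy
        rwa [hinj y (memL y (Or.inr hyv)) tv (memL tv (Or.inr (List.getLast_mem hv))) hxy]
          at hy
      · intro h; exact ⟨tv, h, rfl⟩
    unfold tlOf at hT
    by_cases cu : tu ∈ u.dropLast <;> by_cases cv : tv ∈ v.dropLast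
    · exact Or.inl ⟨(mem_dropLast_iff u hu).mp cu, (mem_dropLast_iff v hv).mp cv⟩
    · rw [if_pos (hmu.mpr cu), if_neg (fun h => cv (hmv.mp h))] at hT
      exact absurd hT (by simp)
    · rw [if_neg (fun h => cu (hmu.mp h)), if_pos (hmv.mpr cv)] at hT
      exact absurd hT (by simp)
    · rw [if_neg (fun h => cu (hmu.mp h)), if_neg (fun h => cv (hmv.mp h))] at hT
      have hiota : ι tu = ι tv := by
        rw [hglu, hglv] at hT
        exact Option.some_injective _ hT
      have : tu = tv := hinj tu (memL tu (Or.inl (List.getLast_mem hu)))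
        tv (memL tv (Or.inr (List.getLast_mem hv))) hiota
      exact Or.inr ⟨this, (not_mem_dropLast_iff u hu).mp cu,
        (not_mem_dropLast_iff v hv).mp cv⟩
  · -- backward direction
    rintro ⟨hc, hcase⟩ S _ h1 h2 f
    have hmem : ∀ x : V, x ∈ u ↔ x ∈ v := fun x => Set.ext_iff.mp hc x
    have hAA : u.toFinset = v.toFinset := by
      ext x; simp only [List.mem_toFinset]; exact hmem x
    have hurw : evalWord f u = some (act f u.dropLast (f (u.getLast hu))) := by
      conv_lhs => rw [← List.dropLast_append_getLast hu]
      rw [eval_act]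
    have hvrw : evalWord f v = some (act f v.dropLast (f (v.getLast hv))) := by
      conv_lhs => rw [← List.dropLast_append_getLast hv]
      rw [eval_act]
    rw [hurw, hvrw]
    apply congrArg some
    rcases hcase with ⟨cu2, cv2⟩ | ⟨hteq, cu1, cv1⟩
    · -- multiple case
      have cu : u.getLast hu ∈ u.dropLast := (mem_dropLast_iff u hu).mpr cu2
      have cv : v.getLast hv ∈ v.dropLast := (mem_dropLast_iff v hv).mpr cv2
      have hdu : u.dropLast.toFinset = u.toFinset := toFinset_dropLast_of_mem u hu cu
      have hdv : v.dropLast.toFinset = u.toFinset := by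
        rw [toFinset_dropLast_of_mem v hv cv, ← hAA]
      have htuA : u.getLast hu ∈ u.toFinset := List.mem_toFinset.mpr (List.getLast_mem hu)
      have htvA : v.getLast hv ∈ u.toFinset := by
        rw [hAA]; exact List.mem_toFinset.mpr (List.getLast_mem hv)
      have stepu : act f u.dropLast (f (u.getLast hu))
          = act f (u.toFinset.erase (u.getLast hu)).toList
              (f (u.getLast hu) * f (u.getLast hu)) := by
        have h' : u.dropLast.toFinset
            = (u.getLast hu :: (u.toFinset.erase (u.getLast hu)).toList).toFinset := by
          rw [hdu, List.toFinset_cons, Finset.toList_toFinset, Finset.insert_erase htuA]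
        rw [act_toFinset f h1 h2 h', act_cons, shift f h1 h2]
      have stepv : act f v.dropLast (f (v.getLast hv))
          = act f (u.toFinset.erase (v.getLast hv)).toList
              (f (v.getLast hv) * f (v.getLast hv)) := by
        have h' : v.dropLast.toFinset
            = (v.getLast hv :: (u.toFinset.erase (v.getLast hv)).toList).toFinset := by
          rw [hdv, List.toFinset_cons, Finset.toList_toFinset, Finset.insert_erase htvA]
        rw [act_toFinset f h1 h2 h', act_cons, shift f h1 h2]
      rw [stepu, stepv]
      by_cases hts : u.getLast hu = v.getLast hv
      · rw [hts]
      · have htvA' : v.getLast hv ∈ u.toFinset.erase (u.getLast hu) :=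
          Finset.mem_erase.mpr ⟨fun h => hts h.symm, htvA⟩
        have htuA' : u.getLast hu ∈ u.toFinset.erase (v.getLast hv) :=
          Finset.mem_erase.mpr ⟨hts, htuA⟩
        have stepu2 : act f (u.toFinset.erase (u.getLast hu)).toList
              (f (u.getLast hu) * f (u.getLast hu))
            = act f ((u.toFinset.erase (u.getLast hu)).erase (v.getLast hv)).toList
                (f (v.getLast hv) * (f (u.getLast hu) * f (u.getLast hu))) := by
          have h' : (u.toFinset.erase (u.getLast hu)).toList.toFinset
              = (v.getLast hv ::
                  ((u.toFinset.erase (u.getLast hu)).erase (v.getLast hv)).toList).toFinset := by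
            rw [List.toFinset_cons, Finset.toList_toFinset, Finset.toList_toFinset,
              Finset.insert_erase htvA']
          rw [act_toFinset f h1 h2 h', act_cons, shift f h1 h2]
        have stepv2 : act f (u.toFinset.erase (v.getLast hv)).toList
              (f (v.getLast hv) * f (v.getLast hv))
            = act f ((u.toFinset.erase (v.getLast hv)).erase (u.getLast hu)).toList
                (f (u.getLast hu) * (f (v.getLast hv) * f (v.getLast hv))) := by
          have h' : (u.toFinset.erase (v.getLast hv)).toList.toFinset
              = (u.getLast hu ::
                  ((u.toFinset.erase (v.getLast hv)).erase (u.getLast hu)).toList).toFinset := by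
            rw [List.toFinset_cons, Finset.toList_toFinset, Finset.toList_toFinset,
              Finset.insert_erase htuA']
          rw [act_toFinset f h1 h2 h', act_cons, shift f h1 h2]
        rw [stepu2, stepv2, base_eq h1 h2]
        apply act_toFinset f h1 h2
        rw [Finset.toList_toFinset, Finset.toList_toFinset]
        ext x
        simp only [Finset.mem_erase]
        tauto
    · -- simple case
      have cu : u.getLast hu ∉ u.dropLast := (not_mem_dropLast_iff u hu).mpr cu1
      have cv : v.getLast hv ∉ v.dropLast := (not_mem_dropLast_iff v hv).mpr cv1
      have h' : u.dropLast.toFinset = v.dropLast.toFinset := by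
        rw [toFinset_dropLast_of_not_mem u hu cu, toFinset_dropLast_of_not_mem v hv cv,
          hAA, hteq]
      rw [← hteq, act_toFinset f h1 h2 h']
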